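/- Assume ‖D³U(x)‖ ≤ χ‖D²U(x)‖ (Frobenius-compatible norms) for all ‖x‖ ≥ K̃. Then for x with ‖x‖ ≥ K̃, γ > 0 small enough that the segment stays outside B(0, K̃), K > 0, and z with ‖z‖ ≤ K: ‖D²U(x + √(2γ)z)‖ ≤ ‖D²U(x)‖ (1 + (CχK)^{1/2} γ^{1/4} e^{Cχ√γ K/2}) for an absolute constant C (from norm equivalence), via a Grönwall argument on t ↦ ‖D²U(x + t√(2γ)z) - D²U(x)‖²_F. -/

import Mathlib

open MeasureTheory Real
open scoped BigOperators RealInnerProductSpace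

noncomputable section

abbrev Euc (d : ℕ) := EuclideanSpace ℝ (Fin d)

/-- Laplacian via the second iterated Fréchet derivative in coordinate directions. -/
def lapl {d : ℕ} (φ : Euc d → ℝ) (x : Euc d) : ℝ :=
  ∑ i : Fin d, iteratedFDeriv ℝ 2 φ x ![EuclideanSpace.single i 1, EuclideanSpace.single i 1]

/-- The Langevin generator `L φ = -⟨∇U, ∇φ⟩ + Δφ`. -/
def gen {d : ℕ} (U φ : Euc d → ℝ) (x : Euc d) : ℝ :=
  - ⟪gradient U x, gradient φ x⟫ + lapl φ x

/-- The Gibbs probability measure `π(dx) ∝ e^{-U(x)} dx`. -/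
def gibbs {d : ℕ} (U : Euc d → ℝ) : Measure (Euc d) :=
  ((∫⁻ x, ENNReal.ofReal (Real.exp (-U x)))⁻¹) •
    ((volume : Measure (Euc d)).withDensity fun x => ENNReal.ofReal (Real.exp (-U x)))

/-- Polynomial growth of the `k`-th derivative. -/
def PolyGrowthD {d : ℕ} (k : ℕ) (f : Euc d → ℝ) : Prop :=
  ∃ (C : ℝ) (p : ℕ), ∀ x, ‖iteratedFDeriv ℝ k f x‖ ≤ C * (1 + ‖x‖) ^ p

set_option maxHeartbeats 1000000 in
theorem num_lem (a S : ℝ) (ha : 0 ≤ a) (h2 : 2*a ≤ S) :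
    Real.exp a - 1 ≤ Real.sqrt S * Real.exp (S/2) := by
  have hS : 0 ≤ S := le_trans (by linarith) h2
  have hexp1 : (1:ℝ) ≤ Real.exp a := Real.one_le_exp ha
  have h1 : Real.exp a - 1 ≤ Real.sqrt (Real.exp (2*a) - 1) := by
    rw [show Real.exp a - 1 = Real.sqrt ((Real.exp a - 1)^2) from
      (Real.sqrt_sq (by linarith)).symm]
    apply Real.sqrt_le_sqrt
    have h2a : Real.exp (2*a) = (Real.exp a)^2 := by
      rw [two_mul, Real.exp_add]; ring
    nlinarith
  have h3 : Real.exp (2*a) - 1 ≤ 2*a * Real.exp (2*a) := by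
    have := Real.add_one_le_exp (-(2*a))
    have hpos : 0 < Real.exp (2*a) := Real.exp_pos _
    have : Real.exp (2*a) * Real.exp (-(2*a)) = 1 := by
      rw [← Real.exp_add]; simp
    nlinarith
  have h4 : Real.sqrt (Real.exp (2*a) - 1) ≤ Real.sqrt (2*a) * Real.exp a := by
    calc Real.sqrt (Real.exp (2*a) - 1) ≤ Real.sqrt (2*a * Real.exp (2*a)) :=
          Real.sqrt_le_sqrt h3
      _ = Real.sqrt (2*a) * Real.exp a := by
          rw [Real.sqrt_mul (by linarith), show Real.exp (2*a) = (Real.exp a)^2 by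
            rw [two_mul, Real.exp_add]; ring, Real.sqrt_sq (Real.exp_pos a).le]
  have h5 : Real.sqrt (2*a) * Real.exp a ≤ Real.sqrt S * Real.exp (S/2) := by
    apply mul_le_mul (Real.sqrt_le_sqrt h2) (Real.exp_le_exp.mpr (by linarith))
      (Real.exp_pos a).le (Real.sqrt_nonneg S)
  linarith


set_option maxHeartbeats 1000000 in
theorem stmt_17 (d : ℕ) :
    ∃ C : ℝ, 0 < C ∧ ∀ U : Euc d → ℝ, ContDiff ℝ 3 U →
      ∀ χ Ktil : ℝ, 0 ≤ χ → 0 ≤ Ktil →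
      (∀ x : Euc d, Ktil ≤ ‖x‖ →
        ‖iteratedFDeriv ℝ 3 U x‖ ≤ χ * ‖iteratedFDeriv ℝ 2 U x‖) →
      ∀ γ K : ℝ, 0 < γ → 0 < K →
      ∀ x : Euc d, Ktil ≤ ‖x‖ →
      (∀ t ∈ Set.Icc (0:ℝ) 1, ∀ z : Euc d, ‖z‖ ≤ K →
        Ktil ≤ ‖x + (t * Real.sqrt (2*γ)) • z‖) →
      ∀ z : Euc d, ‖z‖ ≤ K →
        ‖iteratedFDeriv ℝ 2 U (x + Real.sqrt (2*γ) • z)‖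
          ≤ ‖iteratedFDeriv ℝ 2 U x‖
            * (1 + Real.sqrt (C*χ*K) * γ ^ ((1:ℝ)/4)
                  * Real.exp (C * χ * Real.sqrt γ * K / 2)) := by
  refine ⟨3, by norm_num, ?_⟩
  intro U hU χ Ktil hχ hKtil hyp γ K hγ hK x hx hseg z hz
  set F := iteratedFDeriv ℝ 2 U with hF
  have hFc : ContDiff ℝ 1 F := hU.iteratedFDeriv_right (by norm_num)
  set v : Euc d := Real.sqrt (2*γ) • z with hv
  have hγ2 : (0:ℝ) ≤ 2*γ := by linarith
  have hvnorm : ‖v‖ ≤ Real.sqrt (2*γ) * K := by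
    rw [hv, norm_smul, Real.norm_eq_abs, abs_of_nonneg (Real.sqrt_nonneg _)]
    exact mul_le_mul_of_nonneg_left hz (Real.sqrt_nonneg _)
  set g : ℝ → (Euc d [×2]→L[ℝ] ℝ) := fun t => F (x + t • v) with hg
  set g' : ℝ → (Euc d [×2]→L[ℝ] ℝ) := fun t => fderiv ℝ F (x + t • v) v with hg'
  have hline : ∀ t : ℝ, HasDerivAt (fun s : ℝ => x + s • v) v t := by
    intro t
    simpa using ((hasDerivAt_id t).smul_const v).const_add x
  have hgderiv : ∀ t : ℝ, HasDerivAt g (g' t) t := by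
    intro t
    exact ((hFc.differentiable one_ne_zero) (x + t • v)).hasFDerivAt.comp_hasDerivAt t (hline t)
  set g0 : ℝ := ‖g 0‖ with hg0
  have hg0eq : g 0 = F x := by simp [hg]
  set a : ℝ := χ * ‖v‖ with ha
  have ha0 : 0 ≤ a := mul_nonneg hχ (norm_nonneg _)
  -- key pointwise bound on the path
  have hbound : ∀ t ∈ Set.Icc (0:ℝ) 1, ‖g' t‖ ≤ a * ‖g t - g 0‖ + a * g0 := by
    intro t ht
    have hxK : Ktil ≤ ‖x + t • v‖ := by
      have := hseg t ht z hz
      rwa [show (t * Real.sqrt (2*γ)) • z = t • v by rw [hv, smul_smul]] at this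
    have h1 : ‖g' t‖ ≤ ‖fderiv ℝ F (x + t • v)‖ * ‖v‖ :=
      (fderiv ℝ F (x + t • v)).le_opNorm v
    have h2 : ‖fderiv ℝ F (x + t • v)‖ = ‖iteratedFDeriv ℝ 3 U (x + t • v)‖ :=
      norm_fderiv_iteratedFDeriv
    have h3 : ‖iteratedFDeriv ℝ 3 U (x + t • v)‖ ≤ χ * ‖g t‖ := hyp _ hxK
    have h4 : ‖g t‖ ≤ ‖g t - g 0‖ + g0 := by
      have := norm_sub_norm_le (g t) (g 0); linarith [abs_le.mp (abs_norm_sub_norm_le (g t) (g 0))]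
    calc ‖g' t‖ ≤ ‖fderiv ℝ F (x + t • v)‖ * ‖v‖ := h1
      _ = ‖iteratedFDeriv ℝ 3 U (x + t • v)‖ * ‖v‖ := by rw [h2]
      _ ≤ (χ * ‖g t‖) * ‖v‖ := by
          exact mul_le_mul_of_nonneg_right h3 (norm_nonneg v)
      _ ≤ (χ * (‖g t - g 0‖ + g0)) * ‖v‖ := by
          have := mul_le_mul_of_nonneg_left h4 hχ
          exact mul_le_mul_of_nonneg_right this (norm_nonneg v)
      _ = a * ‖g t - g 0‖ + a * g0 := by rw [ha]; ring
  -- Grönwall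
  have hgron : ‖g 1 - g 0‖ ≤ gronwallBound 0 a (a * g0) 1 := by
    have hcont : ContinuousOn (fun t => g t - g 0) (Set.Icc 0 1) := by
      apply Continuous.continuousOn
      have hline_c : Continuous (fun t : ℝ => x + t • v) :=
        continuous_const.add (continuous_id.smul continuous_const)
      exact (hFc.continuous.comp hline_c).sub continuous_const
    have hder : ∀ t ∈ Set.Ico (0:ℝ) 1,
        HasDerivWithinAt (fun t => g t - g 0) (g' t) (Set.Ici t) t := by
      intro t ht
      exact (((hgderiv t).sub_const (g 0)).hasDerivWithinAt)
    have := norm_le_gronwallBound_of_norm_deriv_right_le (δ := 0) (K := a) (ε := a * g0) hcont hder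
      (by simp) (fun t ht => hbound t ⟨ht.1, ht.2.le⟩) 1 (by norm_num)
    simpa using this
  have hgronval : gronwallBound 0 a (a * g0) 1 ≤ g0 * (Real.exp a - 1) := by
    rcases eq_or_ne a 0 with h | h
    · simp [gronwallBound, h]
    · rw [gronwallBound_of_K_ne_0 h]
      have : a * g0 / a = g0 := by field_simp
      rw [this]; simp
  have hg1 : ‖g 1‖ ≤ g0 * (1 + (Real.exp a - 1)) := by
    have := norm_sub_norm_le (g 1) (g 0)
    have h := le_trans hgron hgronval
    have : ‖g 1‖ ≤ ‖g 1 - g 0‖ + g0 := by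
      have := norm_sub_norm_le (g 1) (g 0); linarith
    nlinarith [norm_nonneg (g 1 - g 0)]
  have hg1eq : g 1 = F (x + v) := by simp [hg]
  -- numeric part
  set S : ℝ := 3 * χ * Real.sqrt γ * K with hS
  have hsqrt2γ : Real.sqrt (2*γ) = Real.sqrt 2 * Real.sqrt γ :=
    Real.sqrt_mul (by norm_num) γ
  have hs2 : Real.sqrt 2 ≤ 1.5 := by
    nlinarith [Real.sq_sqrt (by norm_num : (0:ℝ) ≤ 2), Real.sqrt_nonneg 2]
  have h2aS : 2 * a ≤ S := by
    have hav : a ≤ χ * (Real.sqrt 2 * Real.sqrt γ * K) := by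
      rw [ha, ← hsqrt2γ]
      calc χ * ‖v‖ ≤ χ * (Real.sqrt (2*γ) * K) := mul_le_mul_of_nonneg_left hvnorm hχ
        _ = χ * (Real.sqrt (2*γ) * K) := rfl
    have hpos : 0 ≤ χ * Real.sqrt γ * K :=
      mul_nonneg (mul_nonneg hχ (Real.sqrt_nonneg γ)) hK.le
    rw [hS]; nlinarith [Real.sqrt_nonneg γ]
  have hnum : Real.exp a - 1 ≤ Real.sqrt S * Real.exp (S/2) := num_lem a S ha0 h2aS
  have h14 : Real.sqrt (Real.sqrt γ) = γ ^ ((1:ℝ)/4) := by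
    rw [Real.sqrt_eq_rpow, Real.sqrt_eq_rpow, ← Real.rpow_mul hγ.le]
    norm_num
  have hsplit : Real.sqrt S = Real.sqrt (3*χ*K) * γ ^ ((1:ℝ)/4) := by
    rw [hS, show 3 * χ * Real.sqrt γ * K = (3*χ*K) * Real.sqrt γ by ring,
      Real.sqrt_mul (by positivity), h14]
  have hfinal : Real.exp a - 1
      ≤ Real.sqrt (3*χ*K) * γ ^ ((1:ℝ)/4) * Real.exp (3 * χ * Real.sqrt γ * K / 2) := by
    rw [← hsplit]; exact hnum
  have hg0nn : 0 ≤ g0 := norm_nonneg _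
  calc ‖F (x + v)‖ = ‖g 1‖ := by rw [hg1eq]
    _ ≤ g0 * (1 + (Real.exp a - 1)) := hg1
    _ ≤ g0 * (1 + Real.sqrt (3*χ*K) * γ ^ ((1:ℝ)/4)
          * Real.exp (3 * χ * Real.sqrt γ * K / 2)) := by
        apply mul_le_mul_of_nonneg_left _ hg0nn
        linarith
    _ = ‖F x‖ * (1 + Real.sqrt (3*χ*K) * γ ^ ((1:ℝ)/4)
          * Real.exp (3 * χ * Real.sqrt γ * K / 2)) := by rw [hg0, hg0eq]
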